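/- The Segre ideal I₀ = ⟨x_a x_b − x_{a∨b} x_{a∧b} : (a,b) ∈ S⟩ ⊆ ℝ[x_a : a ∈ [n₁]×⋯×[n_d]] is a real radical ideal, i.e., I₀ equals its real radical. -/

import Mathlib

open MvPolynomial

namespace Stmt12

abbrev Idx (d : ℕ) (n : Fin d → ℕ) := (i : Fin d) → Fin (n i)
abbrev Var (d : ℕ) (n : Fin d → ℕ) := Option ((i : Fin d) × Fin (n i))

variable {d : ℕ} {n : Fin d → ℕ}

noncomputable def vv (a : Idx d n) : MvPolynomial (Var d n) ℝ :=
  X none * ∏ i, X (some ⟨i, a i⟩)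

noncomputable def phi : MvPolynomial (Idx d n) ℝ →ₐ[ℝ] MvPolynomial (Var d n) ℝ :=
  aeval vv

def colA (a : Idx d n) : Multiset (Var d n) :=
  none ::ₘ (Finset.univ.val.map fun i => some ⟨i, a i⟩)

def col (B : Multiset (Idx d n)) : Multiset (Var d n) := B.bind colA

noncomputable def XX {τ : Type*} (B : Multiset τ) : MvPolynomial τ ℝ :=
  (B.map X).prod

lemma XX_zero {τ : Type*} : XX (0 : Multiset τ) = 1 := by simp [XX]

lemma XX_cons {τ : Type*} (a : τ) (B : Multiset τ) :
    XX (a ::ₘ B) = X a * XX B := by simp [XX]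

lemma XX_eq_monomial {τ : Type*} [DecidableEq τ] (B : Multiset τ) :
    XX B = monomial (Multiset.toFinsupp B) (1 : ℝ) := by
  induction B using Multiset.induction with
  | empty => simp [XX_zero]
  | cons a B ih =>
      rw [XX_cons, ih, ← Multiset.singleton_add, map_add, Multiset.toFinsupp_singleton]
      rw [show (X a : MvPolynomial τ ℝ) = monomial (Finsupp.single a 1) 1 by
        rw [← X_pow_eq_monomial, pow_one], monomial_mul, one_mul]

lemma phi_X (a : Idx d n) : phi (X a) = XX (colA a) := by
  rw [phi, aeval_X, vv, colA, XX, Multiset.map_cons, Multiset.prod_cons, Multiset.map_map]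
  rfl

lemma phi_XX (B : Multiset (Idx d n)) : phi (XX B) = XX (col B) := by
  induction B using Multiset.induction with
  | empty => simp [XX_zero, col]
  | cons a B ih =>
      rw [XX_cons, map_mul, phi_X, ih]
      rw [show col (a ::ₘ B) = colA a + col B from Multiset.cons_bind a B colA]
      simp [XX, Multiset.map_add]


lemma count_colA_none (a : Idx d n) : (colA a).count none = 1 := by
  rw [colA, Multiset.count_cons_self]
  have : Multiset.count (none : Var d n)
      (Finset.univ.val.map fun i => some ⟨i, a i⟩) = 0 := by
    rw [Multiset.count_eq_zero]
    intro h
    obtain ⟨i, _, hi⟩ := Multiset.mem_map.1 h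
    exact Option.some_ne_none _ hi
  omega

lemma count_colA_some (a : Idx d n) (i : Fin d) (j : Fin (n i)) :
    (colA a).count (some ⟨i, j⟩) = if a i = j then 1 else 0 := by
  rw [colA, Multiset.count_cons_of_ne (by simp)]
  by_cases h : a i = j
  · subst h
    rw [if_pos rfl]
    have hinj : Function.Injective (fun i : Fin d => (some ⟨i, a i⟩ : Var d n)) := by
      intro x y hxy
      exact (Sigma.mk.inj_iff.1 (Option.some.inj hxy)).1
    rw [Multiset.count_map_eq_count' _ _ hinj]
    exact Multiset.count_eq_one_of_mem Finset.univ.nodup (Finset.mem_univ i)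
  · rw [if_neg h, Multiset.count_eq_zero]
    intro hmem
    obtain ⟨i', _, hi'⟩ := Multiset.mem_map.1 hmem
    obtain ⟨h1, h2⟩ := Sigma.mk.inj_iff.1 (Option.some.inj hi')
    subst h1
    exact h (eq_of_heq h2)


lemma count_col_none (B : Multiset (Idx d n)) : (col B).count none = Multiset.card B := by
  induction B using Multiset.induction with
  | empty => simp [col]
  | cons a B ih =>
      rw [col, Multiset.cons_bind, Multiset.count_add, ← col, ih, count_colA_none,
        Multiset.card_cons, add_comm]

lemma count_col_some (B : Multiset (Idx d n)) (i : Fin d) (j : Fin (n i)) :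
    (col B).count (some ⟨i, j⟩) = (B.map fun a => a i).count j := by
  induction B using Multiset.induction with
  | empty => simp [col]
  | cons a B ih =>
      rw [col, Multiset.cons_bind, Multiset.count_add, ← col, ih, count_colA_some,
        Multiset.map_cons, Multiset.count_cons]
      by_cases h : a i = j
      · simp [h, Nat.add_comm]
      · simp [h, Ne.symm h]

lemma col_inj_data {B C : Multiset (Idx d n)} (h : col B = col C) :
    Multiset.card B = Multiset.card C ∧
      ∀ i : Fin d, B.map (fun a => a i) = C.map (fun a => a i) := by
  constructor
  · rw [← count_col_none, ← count_col_none, h]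
  · intro i
    ext j
    rw [← count_col_some, ← count_col_some, h]

/-- pairwise-comparable multiset -/
def IsChainM (B : Multiset (Idx d n)) : Prop := ∀ a ∈ B, ∀ b ∈ B, a ≤ b ∨ b ≤ a

lemma chain_cons {a : Idx d n} {B : Multiset (Idx d n)} (h : IsChainM (a ::ₘ B)) :
    IsChainM B := fun x hx y hy =>
  h x (Multiset.mem_cons_of_mem hx) y (Multiset.mem_cons_of_mem hy)

lemma exists_top {B : Multiset (Idx d n)} (hc : IsChainM B) (hne : B ≠ 0) :
    ∃ t ∈ B, ∀ a ∈ B, a ≤ t := by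
  induction B using Multiset.induction with
  | empty => exact absurd rfl hne
  | cons a B ih =>
      by_cases hB : B = 0
      · subst hB
        exact ⟨a, Multiset.mem_cons_self a 0, fun x hx => by
          rw [Multiset.mem_cons] at hx
          rcases hx with rfl | hx
          · exact le_refl x
          · simp at hx⟩
      · obtain ⟨t, htB, ht⟩ := ih (chain_cons hc) hB
        rcases hc a (Multiset.mem_cons_self a B) t (Multiset.mem_cons_of_mem htB) with
          hat | hta
        · exact ⟨t, Multiset.mem_cons_of_mem htB, fun x hx => by
            rcases Multiset.mem_cons.1 hx with rfl | hx
            · exact hat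
            · exact ht x hx⟩
        · exact ⟨a, Multiset.mem_cons_self a B, fun x hx => by
            rcases Multiset.mem_cons.1 hx with rfl | hx
            · exact le_refl x
            · exact le_trans (ht x hx) hta⟩

lemma chain_erase {B : Multiset (Idx d n)} (hc : IsChainM B) (t : Idx d n) :
    IsChainM (B.erase t) := fun x hx y hy =>
  hc x (Multiset.mem_of_mem_erase hx) y (Multiset.mem_of_mem_erase hy)

lemma chain_ext : ∀ (c : ℕ) (B C : Multiset (Idx d n)), Multiset.card B = c →
    IsChainM B → IsChainM C → Multiset.card B = Multiset.card C →
    (∀ i : Fin d, B.map (fun a => a i) = C.map (fun a => a i)) → B = C := by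
  intro c
  induction c with
  | zero =>
      intro B C hBc _ _ hcard _
      rw [Multiset.card_eq_zero.1 hBc, Multiset.card_eq_zero.1 (by omega : Multiset.card C = 0)]
  | succ c ih =>
      intro B C hBc hB hC hcard hcols
      have hBne : B ≠ 0 := by
        intro h; rw [h] at hBc; simp at hBc
      have hCne : C ≠ 0 := by
        intro h; rw [h] at hcard; simp [hBc] at hcard
      obtain ⟨t, htB, ht⟩ := exists_top hB hBne
      obtain ⟨u, huC, hu⟩ := exists_top hC hCne
      have htu : t = u := by
        funext i
        refine le_antisymm ?_ ?_
        · have : t i ∈ C.map (fun a => a i) := by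
            rw [← hcols i]; exact Multiset.mem_map_of_mem _ htB
          obtain ⟨x, hx, hxe⟩ := Multiset.mem_map.1 this
          exact hxe ▸ (hu x hx i)
        · have : u i ∈ B.map (fun a => a i) := by
            rw [hcols i]; exact Multiset.mem_map_of_mem _ huC
          obtain ⟨x, hx, hxe⟩ := Multiset.mem_map.1 this
          exact hxe ▸ (ht x hx i)
      subst htu
      have hBe : B = t ::ₘ B.erase t := (Multiset.cons_erase htB).symm
      have hCe : C = t ::ₘ C.erase t := (Multiset.cons_erase huC).symm
      have hkey : B.erase t = C.erase t := by
        apply ih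
        · have := congrArg Multiset.card hBe
          rw [Multiset.card_cons] at this; omega
        · exact chain_erase hB t
        · exact chain_erase hC t
        · have h1 := congrArg Multiset.card hBe
          have h2 := congrArg Multiset.card hCe
          rw [Multiset.card_cons] at h1 h2; omega
        · intro i
          have h1 : B.map (fun a => a i) = t i ::ₘ (B.erase t).map (fun a => a i) := by
            conv_lhs => rw [hBe]
            rw [Multiset.map_cons]
          have h2 : C.map (fun a => a i) = t i ::ₘ (C.erase t).map (fun a => a i) := by
            conv_lhs => rw [hCe]
            rw [Multiset.map_cons]
          have := hcols i
          rw [h1, h2] at this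
          exact (Multiset.cons_inj_right _).1 this
      rw [hBe, hCe, hkey]

lemma chain_col_inj {B C : Multiset (Idx d n)} (hB : IsChainM B) (hC : IsChainM C)
    (h : col B = col C) : B = C := by
  obtain ⟨hcard, hcols⟩ := col_inj_data h
  exact chain_ext (Multiset.card B) B C rfl hB hC hcard hcols


def w (a : Idx d n) : ℕ := ∑ i, (a i : ℕ)

def msr (B : Multiset (Idx d n)) : ℕ := (B.map fun a => (w a)^2).sum

def Wb (d : ℕ) (n : Fin d → ℕ) : ℕ := ∑ i, n i

lemma w_le (a : Idx d n) : w a ≤ Wb d n :=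
  Finset.sum_le_sum fun i _ => le_of_lt (a i).isLt

lemma msr_le (B : Multiset (Idx d n)) : msr B ≤ Multiset.card B * (Wb d n)^2 := by
  induction B using Multiset.induction with
  | empty => simp [msr]
  | cons a B ih =>
      have h1 : (w a)^2 ≤ (Wb d n)^2 := Nat.pow_le_pow_left (w_le a) 2
      have h2 : msr (a ::ₘ B) = (w a)^2 + msr B := by
        rw [msr, Multiset.map_cons, Multiset.sum_cons, ← msr]
      calc msr (a ::ₘ B) = (w a)^2 + msr B := h2
        _ ≤ (Wb d n)^2 + Multiset.card B * (Wb d n)^2 := Nat.add_le_add h1 ih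
        _ = Multiset.card (a ::ₘ B) * (Wb d n)^2 := by rw [Multiset.card_cons]; ring

lemma sq_lt_int {s t x y : ℤ} (hsum : s + t = x + y) (hx : x < s) (hy : y < s) :
    x^2 + y^2 < s^2 + t^2 := by
  have h1 : (s - x) * (s - y) > 0 := mul_pos (sub_pos.2 hx) (sub_pos.2 hy)
  have h3 : s * (s + t) = s * (x + y) := by rw [hsum]
  have h2 : x * y > s * t := by nlinarith [h1, h3]
  have h4 : (s + t)^2 = (x + y)^2 := by rw [hsum]
  nlinarith [h2, h4]

lemma w_sup_add_inf (a b : Idx d n) : w (a ⊔ b) + w (a ⊓ b) = w a + w b := by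
  rw [w, w, w, w, ← Finset.sum_add_distrib, ← Finset.sum_add_distrib]
  apply Finset.sum_congr rfl
  intro i _
  rcases le_total (a i) (b i) with h | h
  · rw [Pi.sup_apply, Pi.inf_apply, sup_eq_right.2 h, inf_eq_left.2 h]; omega
  · rw [Pi.sup_apply, Pi.inf_apply, sup_eq_left.2 h, inf_eq_right.2 h]

lemma w_lt_sup (a b : Idx d n) (h : ∃ j, a j < b j) : w a < w (a ⊔ b) := by
  apply Finset.sum_lt_sum
  · intro i _
    exact Fin.le_def.1 ((le_sup_left : a ≤ a ⊔ b) i)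
  · obtain ⟨j, hj⟩ := h
    exact ⟨j, Finset.mem_univ j,
      Fin.lt_def.1 (lt_of_lt_of_le hj ((le_sup_right : b ≤ a ⊔ b) j))⟩

lemma colA_swap (a b : Idx d n) :
    colA a + colA b = colA (a ⊔ b) + colA (a ⊓ b) := by
  ext v
  rcases v with _ | ⟨i, j⟩
  · rw [Multiset.count_add, Multiset.count_add, count_colA_none, count_colA_none,
      count_colA_none, count_colA_none]
  · rw [Multiset.count_add, Multiset.count_add, count_colA_some, count_colA_some,
      count_colA_some, count_colA_some, Pi.sup_apply, Pi.inf_apply]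
    rcases le_total (a i) (b i) with h | h
    · rw [sup_eq_right.2 h, inf_eq_left.2 h, Nat.add_comm]
    · rw [sup_eq_left.2 h, inf_eq_right.2 h]

lemma col_swap (a b : Idx d n) (D : Multiset (Idx d n)) :
    col (a ::ₘ b ::ₘ D) = col ((a ⊔ b) ::ₘ (a ⊓ b) ::ₘ D) := by
  rw [col, col, Multiset.cons_bind, Multiset.cons_bind, Multiset.cons_bind,
    Multiset.cons_bind, ← add_assoc, ← add_assoc, colA_swap]

lemma msr_swap (a b : Idx d n) (D : Multiset (Idx d n))
    (hi : ∃ i, b i < a i) (hj : ∃ j, a j < b j) :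
    msr (a ::ₘ b ::ₘ D) < msr ((a ⊔ b) ::ₘ (a ⊓ b) ::ₘ D) := by
  have hcons : ∀ (x y : Idx d n) (E : Multiset (Idx d n)),
      msr (x ::ₘ y ::ₘ E) = (w x)^2 + (w y)^2 + msr E := by
    intro x y E
    rw [msr, Multiset.map_cons, Multiset.map_cons, Multiset.sum_cons, Multiset.sum_cons,
      ← msr, add_assoc]
  rw [hcons, hcons]
  have hkey : (w a)^2 + (w b)^2 < (w (a ⊔ b))^2 + (w (a ⊓ b))^2 := by
    have h1 : ((w (a ⊔ b)) : ℤ) + (w (a ⊓ b)) = (w a) + (w b) := by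
      exact_mod_cast w_sup_add_inf a b
    have h2 : ((w a) : ℤ) < (w (a ⊔ b)) := by exact_mod_cast w_lt_sup a b hj
    have h3 : ((w b) : ℤ) < (w (a ⊔ b)) := by
      have : w b < w (b ⊔ a) := w_lt_sup b a hi
      rw [sup_comm] at this
      exact_mod_cast this
    exact_mod_cast sq_lt_int h1 h2 h3
  omega


lemma vv_mul (a b : Idx d n) : vv a * vv b = vv (a ⊔ b) * vv (a ⊓ b) := by
  have h2 : (∏ i, (X (some ⟨i, a i⟩) : MvPolynomial (Var d n) ℝ)) *
      (∏ i, X (some ⟨i, b i⟩)) =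
      (∏ i, (X (some ⟨i, (a ⊔ b) i⟩) : MvPolynomial (Var d n) ℝ)) *
      (∏ i, X (some ⟨i, (a ⊓ b) i⟩)) := by
    rw [← Finset.prod_mul_distrib, ← Finset.prod_mul_distrib]
    apply Finset.prod_congr rfl
    intro i _
    rcases le_total (a i) (b i) with h | h
    · rw [Pi.sup_apply, Pi.inf_apply, sup_eq_right.2 h, inf_eq_left.2 h, mul_comm]
    · rw [Pi.sup_apply, Pi.inf_apply, sup_eq_left.2 h, inf_eq_right.2 h]
  simp only [vv]
  rw [mul_mul_mul_comm, h2]; ring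

section Ideal

variable (I₀ : Ideal (MvPolynomial (Idx d n) ℝ))
variable (hI₀ : I₀ = Ideal.span {p | ∃ a b : Idx d n,
      (∃ i, b i < a i) ∧ (∃ j, a j < b j) ∧
      p = X a * X b - X (a ⊔ b) * X (a ⊓ b)})

include hI₀

lemma gen_mem (a b : Idx d n) (hi : ∃ i, b i < a i) (hj : ∃ j, a j < b j) :
    X a * X b - X (a ⊔ b) * X (a ⊓ b) ∈ I₀ := by
  rw [hI₀]
  exact Ideal.subset_span ⟨a, b, hi, hj, rfl⟩

lemma XX_swap_mem (a b : Idx d n) (D : Multiset (Idx d n))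
    (hi : ∃ i, b i < a i) (hj : ∃ j, a j < b j) :
    XX (a ::ₘ b ::ₘ D) - XX ((a ⊔ b) ::ₘ (a ⊓ b) ::ₘ D) ∈ I₀ := by
  have h : XX (a ::ₘ b ::ₘ D) - XX ((a ⊔ b) ::ₘ (a ⊓ b) ::ₘ D) =
      (X a * X b - X (a ⊔ b) * X (a ⊓ b)) * XX D := by
    rw [XX_cons, XX_cons, XX_cons, XX_cons]; ring
  rw [h]
  exact Ideal.mul_mem_right _ _ (gen_mem I₀ hI₀ a b hi hj)

lemma sort_exists : ∀ (k : ℕ) (B : Multiset (Idx d n)),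
    Multiset.card B * (Wb d n)^2 + 1 - msr B ≤ k →
    ∃ C, IsChainM C ∧ col C = col B ∧ XX B - XX C ∈ I₀ := by
  intro k
  induction k with
  | zero =>
      intro B hk
      have h1 := msr_le B
      omega
  | succ k ih =>
      intro B hk
      by_cases hch : IsChainM B
      · exact ⟨B, hch, rfl, by rw [sub_self]; exact Submodule.zero_mem _⟩
      · rw [IsChainM] at hch
        push_neg at hch
        obtain ⟨a, ha, b, hb, hab1, hab2⟩ := hch
        have hi : ∃ i, b i < a i := by
          obtain ⟨i, hii⟩ := not_forall.1 (fun h => hab1 h)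
          exact ⟨i, not_le.1 hii⟩
        have hj : ∃ j, a j < b j := by
          obtain ⟨j, hjj⟩ := not_forall.1 (fun h => hab2 h)
          exact ⟨j, not_le.1 hjj⟩
        have hne : b ≠ a := fun h => hab1 (h ▸ le_refl a)
        have hbB : b ∈ B.erase a := (Multiset.mem_erase_of_ne hne).2 hb
        set D := (B.erase a).erase b with hD
        have hBD : B = a ::ₘ b ::ₘ D := by
          rw [hD, Multiset.cons_erase hbB, Multiset.cons_erase ha]
        set B' := (a ⊔ b) ::ₘ (a ⊓ b) ::ₘ D with hB'
        have hcard : Multiset.card B' = Multiset.card B := by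
          rw [hB', hBD]; simp
        have hmsr : msr B < msr B' := by
          rw [hBD, hB']
          exact msr_swap a b D hi hj
        have hmsrle : msr B' ≤ Multiset.card B' * (Wb d n)^2 := msr_le B'
        have hmeas : Multiset.card B' * (Wb d n)^2 + 1 - msr B' ≤ k := by
          rw [hcard] at hmsrle ⊢
          omega
        obtain ⟨C, hCc, hCcol, hCmem⟩ := ih B' hmeas
        refine ⟨C, hCc, ?_, ?_⟩
        · rw [hCcol, hB', hBD]
          exact (col_swap a b D).symm
        · have h1 : XX B - XX B' ∈ I₀ := by
            rw [hBD, hB']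
            exact XX_swap_mem I₀ hI₀ a b D hi hj
          have h2 : XX B - XX C = (XX B - XX B') + (XX B' - XX C) := by ring
          rw [h2]
          exact Submodule.add_mem _ h1 hCmem


lemma mem_ker_of_mem {f : MvPolynomial (Idx d n) ℝ} (hf : f ∈ I₀) : phi f = 0 := by
  have hle : I₀ ≤ RingHom.ker (phi (d := d) (n := n)).toRingHom := by
    rw [hI₀]
    apply Ideal.span_le.2
    rintro p ⟨a, b, hi, hj, rfl⟩
    rw [SetLike.mem_coe, RingHom.mem_ker]
    show phi (X a * X b - X (a ⊔ b) * X (a ⊓ b)) = 0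
    rw [map_sub, map_mul, map_mul, phi, aeval_X, aeval_X, aeval_X, aeval_X, vv_mul,
      sub_self]
  exact hle hf

lemma ker_le {f : MvPolynomial (Idx d n) ℝ} (hker : phi f = 0) : f ∈ I₀ := by
  classical
  have hsort : ∀ m : (Idx d n) →₀ ℕ, ∃ C, IsChainM C ∧
      col C = col (Finsupp.toMultiset m) ∧ XX (Finsupp.toMultiset m) - XX C ∈ I₀ :=
    fun m => sort_exists I₀ hI₀ _ (Finsupp.toMultiset m) le_rfl
  choose Cm hCchain hCcol hCmem using hsort
  set s := f.support with hs
  set g : MvPolynomial (Idx d n) ℝ := ∑ m ∈ s, (coeff m f) • XX (Cm m) with hg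
  have hfg : f - g ∈ I₀ := by
    have hrw : f - g = ∑ m ∈ s, (coeff m f) • (XX (Finsupp.toMultiset m) - XX (Cm m)) := by
      conv_lhs => rw [as_sum f]
      rw [hg, ← Finset.sum_sub_distrib]
      apply Finset.sum_congr rfl
      intro m _
      rw [smul_sub]
      congr 1
      rw [XX_eq_monomial, Finsupp.toMultiset_toFinsupp, smul_monomial, smul_eq_mul, mul_one]
    rw [hrw]
    exact Submodule.sum_mem _ fun m _ => Submodule.smul_of_tower_mem _ _ (hCmem m)
  have hgker : phi g = 0 := by
    have h1 : phi (f - g) = 0 := mem_ker_of_mem I₀ hI₀ hfg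
    rw [map_sub, hker, zero_sub, neg_eq_zero] at h1
    exact h1
  have hcoeffg : ∀ t', coeff t' g =
      ∑ m ∈ s, if Multiset.toFinsupp (Cm m) = t' then coeff m f else 0 := by
    intro t'
    rw [hg, coeff_sum]
    apply Finset.sum_congr rfl
    intro m _
    rw [XX_eq_monomial, smul_monomial, smul_eq_mul, mul_one, coeff_monomial]
  have hg0 : g = 0 := by
    apply MvPolynomial.ext
    intro t
    rw [coeff_zero, hcoeffg t]
    by_cases hex : ∃ m₀ ∈ s, Multiset.toFinsupp (Cm m₀) = t
    · obtain ⟨m₀, hm₀s, hm₀⟩ := hex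
      have hphig : coeff (Multiset.toFinsupp (col (Cm m₀))) (phi g) =
          ∑ m ∈ s, if Multiset.toFinsupp (col (Cm m)) =
            Multiset.toFinsupp (col (Cm m₀)) then coeff m f else 0 := by
        rw [hg, map_sum, coeff_sum]
        apply Finset.sum_congr rfl
        intro m _
        rw [map_smul, phi_XX, XX_eq_monomial, smul_monomial, smul_eq_mul, mul_one,
          coeff_monomial]
      have heq : ∀ m ∈ s,
          (if Multiset.toFinsupp (Cm m) = t then coeff m f else 0) =
          (if Multiset.toFinsupp (col (Cm m)) =
            Multiset.toFinsupp (col (Cm m₀)) then coeff m f else 0) := by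
        intro m _
        congr 1
        apply propext
        constructor
        · intro h
          have h1 : Cm m = Cm m₀ :=
            Multiset.toFinsupp.injective (by rw [h, hm₀])
          rw [h1]
        · intro h
          have hcol : col (Cm m) = col (Cm m₀) := Multiset.toFinsupp.injective h
          rw [chain_col_inj (hCchain m) (hCchain m₀) hcol, hm₀]
      rw [Finset.sum_congr rfl heq, ← hphig, hgker, coeff_zero]
    · apply Finset.sum_eq_zero
      intro m hm
      rw [if_neg (fun h => hex ⟨m, hm, h⟩)]
  have hfin := hfg
  rw [hg0, sub_zero] at hfin
  exact hfin

end Ideal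

end Stmt12

/-- The Segre ideal `I₀ = ⟨x_a x_b − x_{a∨b} x_{a∧b} : (a,b) ∈ S⟩` is real radical:
a polynomial `f` satisfies `f^{2r} + Σ gᵢ² ∈ I₀` for some `r > 0` and `gᵢ` iff
`f ∈ I₀`. -/
theorem stmt_12 (d : ℕ) (n : Fin d → ℕ)
    (I₀ : Ideal (MvPolynomial ((i : Fin d) → Fin (n i)) ℝ))
    (hI₀ : I₀ = Ideal.span {p | ∃ a b : (i : Fin d) → Fin (n i),
      (∃ i, b i < a i) ∧ (∃ j, a j < b j) ∧
      p = MvPolynomial.X a * MvPolynomial.X b -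
          MvPolynomial.X (a ⊔ b) * MvPolynomial.X (a ⊓ b)}) :
    ∀ f : MvPolynomial ((i : Fin d) → Fin (n i)) ℝ,
      (∃ r : ℕ, 0 < r ∧ ∃ (l : ℕ) (g : Fin l → MvPolynomial ((i : Fin d) → Fin (n i)) ℝ),
        f ^ (2 * r) + ∑ i, (g i) ^ 2 ∈ I₀) ↔ f ∈ I₀ := by
  intro f
  constructor
  · rintro ⟨r, hr, l, g, hmem⟩
    apply Stmt12.ker_le I₀ hI₀
    have h0 : Stmt12.phi (f ^ (2*r) + ∑ i, (g i) ^ 2) = 0 :=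
      Stmt12.mem_ker_of_mem I₀ hI₀ hmem
    apply MvPolynomial.funext
    intro x
    rw [map_zero]
    have hx := congrArg (MvPolynomial.eval x) h0
    simp only [map_add, map_pow, map_sum, map_zero] at hx
    have hs : (0:ℝ) ≤ ∑ i, MvPolynomial.eval x (Stmt12.phi (g i)) ^ 2 :=
      Finset.sum_nonneg fun i _ => sq_nonneg _
    have hp : (0:ℝ) ≤ MvPolynomial.eval x (Stmt12.phi f) ^ (2*r) :=
      (even_two_mul r).pow_nonneg _
    have h1 : MvPolynomial.eval x (Stmt12.phi f) ^ (2*r) = 0 := by linarith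
    exact pow_eq_zero_iff (by omega : 2*r ≠ 0) |>.1 h1
  · intro hf
    refine ⟨1, Nat.one_pos, 0, fun _ => 0, ?_⟩
    have h : f ^ (2*1) + ∑ _i : Fin 0, ((0:MvPolynomial ((i : Fin d) → Fin (n i)) ℝ))^2
        = f * f := by
      simp only [Finset.univ_eq_empty, Finset.sum_empty, add_zero]
      ring
    rw [h]
    exact Ideal.mul_mem_left _ f hf
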